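/- For any two languages L and K over an alphabet A, if both L and K are regular then their shuffle L ⧢ K is regular. -/

import Mathlib

/-- `IsShuffle w v u` means `u` is an interleaving of `w` and `v`. -/
inductive IsShuffle {α : Type*} : List α → List α → List α → Prop
  | nil : IsShuffle [] [] []
  | left {a : α} {w v u : List α} : IsShuffle w v u → IsShuffle (a :: w) v (a :: u)
  | right {a : α} {w v u : List α} : IsShuffle w v u → IsShuffle w (a :: v) (a :: u)

/-- The shuffle of two languages. -/
def Language.shuffle {α : Type*} (L K : Language α) : Language α :=
  {u | ∃ w ∈ L, ∃ v ∈ K, IsShuffle w v u}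

/-- The shuffle NFA of two DFAs. -/
def shuffleNFA {α : Type*} {σ₁ σ₂ : Type} (M₁ : DFA α σ₁) (M₂ : DFA α σ₂) :
    NFA α (σ₁ × σ₂) where
  step := fun p a => {(M₁.step p.1 a, p.2), (p.1, M₂.step p.2 a)}
  start := {(M₁.start, M₂.start)}
  accept := {p | p.1 ∈ M₁.accept ∧ p.2 ∈ M₂.accept}

theorem NFA.evalFrom_union' {α : Type*} {σ : Type*} (N : NFA α σ) (S T : Set σ) (u : List α) :
    N.evalFrom (S ∪ T) u = N.evalFrom S u ∪ N.evalFrom T u := by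
  induction u generalizing S T with
  | nil => rfl
  | cons a u ih =>
    have h : N.stepSet (S ∪ T) a = N.stepSet S a ∪ N.stepSet T a := by
      exact Set.biUnion_union S T _
    show N.evalFrom (N.stepSet (S ∪ T) a) u = _
    rw [h, ih]
    rfl

theorem shuffleNFA_evalFrom {α : Type*} {σ₁ σ₂ : Type} (M₁ : DFA α σ₁) (M₂ : DFA α σ₂)
    (u : List α) : ∀ p q s t, (s, t) ∈ (shuffleNFA M₁ M₂).evalFrom {(p, q)} u ↔
      ∃ w v, IsShuffle w v u ∧ M₁.evalFrom p w = s ∧ M₂.evalFrom q v = t := by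
  induction u with
  | nil =>
    intro p q s t
    constructor
    · rintro h
      simp only [NFA.evalFrom_nil, Set.mem_singleton_iff, Prod.mk.injEq] at h
      exact ⟨[], [], IsShuffle.nil, h.1.symm, h.2.symm⟩
    · rintro ⟨w, v, hsh, h1, h2⟩
      cases hsh
      simp only [DFA.evalFrom_nil] at h1 h2
      simp [h1, h2]
  | cons a u ih =>
    intro p q s t
    have hstep : (shuffleNFA M₁ M₂).stepSet {(p, q)} a =
        ({(M₁.step p a, q)} : Set (σ₁ × σ₂)) ∪ {(p, M₂.step q a)} := by
      ext x
      simp [NFA.stepSet, shuffleNFA, or_comm]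
    have : (shuffleNFA M₁ M₂).evalFrom {(p, q)} (a :: u)
        = (shuffleNFA M₁ M₂).evalFrom ({(M₁.step p a, q)} : Set (σ₁ × σ₂)) u
          ∪ (shuffleNFA M₁ M₂).evalFrom {(p, M₂.step q a)} u := by
      show (shuffleNFA M₁ M₂).evalFrom ((shuffleNFA M₁ M₂).stepSet {(p, q)} a) u = _
      rw [hstep, NFA.evalFrom_union]
    rw [this]
    constructor
    · rintro (h | h)
      · obtain ⟨w, v, hsh, h1, h2⟩ := (ih _ _ _ _).1 h
        exact ⟨a :: w, v, IsShuffle.left hsh, h1, h2⟩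
      · obtain ⟨w, v, hsh, h1, h2⟩ := (ih _ _ _ _).1 h
        exact ⟨w, a :: v, IsShuffle.right hsh, h1, h2⟩
    · rintro ⟨w, v, hsh, h1, h2⟩
      cases hsh with
      | left hsh' => exact Or.inl ((ih _ _ _ _).2 ⟨_, _, hsh', h1, h2⟩)
      | right hsh' => exact Or.inr ((ih _ _ _ _).2 ⟨_, _, hsh', h1, h2⟩)

/-- The shuffle of two regular languages is regular. -/
theorem shuffle_regular {α : Type*} (L K : Language α)
    (hL : L.IsRegular) (hK : K.IsRegular) : (L.shuffle K).IsRegular := by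
  obtain ⟨σ₁, _, M₁, rfl⟩ := hL
  obtain ⟨σ₂, _, M₂, rfl⟩ := hK
  refine ⟨Set (σ₁ × σ₂), Fintype.ofFinite _, (shuffleNFA M₁ M₂).toDFA, ?_⟩
  rw [NFA.toDFA_correct]
  ext u
  constructor
  · rintro ⟨⟨s, t⟩, ⟨hs, ht⟩, hev⟩
    obtain ⟨w, v, hsh, h1, h2⟩ := (shuffleNFA_evalFrom M₁ M₂ u _ _ _ _).1 hev
    subst h1; subst h2
    exact ⟨w, hs, v, ht, hsh⟩
  · rintro ⟨w, hw, v, hv, hsh⟩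
    exact ⟨(M₁.evalFrom M₁.start w, M₂.evalFrom M₂.start v), ⟨hw, hv⟩,
      (shuffleNFA_evalFrom M₁ M₂ u _ _ _ _).2 ⟨w, v, hsh, rfl, rfl⟩⟩
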